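/- Let f: ℝⁿ → ℝ be a convex quartic polynomial with leading form f₄ and norm ‖u‖_f = (f₄[u]⁴)^{1/4} (assume f₄ positive definite). Then for all x, y and all τ > 0: f(y) − f(x) − ⟨∇f(x), y−x⟩ − (1/2)∇²f(x)[y−x, y−x] ≤ (1/(6τ)) ∇²f(x)[y−x,y−x] + (1+2τ) ‖y−x‖_f⁴. -/

import Mathlib

lemma aux_line {E : Type*} [NormedAddCommGroup E] [NormedSpace ℝ E]
    (f : E → ℝ) (hf : ContDiff ℝ 4 f) (k : ℕ) (hk : k < 4) (x h : E) (t : ℝ) :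
    HasDerivAt (fun s : ℝ => iteratedFDeriv ℝ k f (x + s • h) (fun _ => h))
      (iteratedFDeriv ℝ (k+1) f (x + t • h) (fun _ => h)) t := by
  have hline : HasDerivAt (fun s : ℝ => x + s • h) h t := by
    simpa using ((hasDerivAt_id t).smul_const h).const_add x
  have hdiff := hf.differentiable_iteratedFDeriv (by exact_mod_cast hk)
  have h1 := (hdiff (x + t • h)).hasFDerivAt
  have h2 := h1.comp_hasDerivAt t hline
  have h3 := ((ContinuousMultilinearMap.apply ℝ (fun _ : Fin k => E) ℝ
      (fun _ => h)).hasFDerivAt.comp_hasDerivAt t h2)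
  refine h3.congr_deriv ?_
  rw [iteratedFDeriv_succ_apply_left]; rfl

lemma const_of_hasDerivAt_zero {φ : ℝ → ℝ} (H : ∀ t, HasDerivAt φ 0 t) (t : ℝ) : φ t = φ 0 :=
  is_const_of_deriv_eq_zero (fun s => (H s).differentiableAt) (fun s => (H s).deriv) t 0

lemma quarticHasDeriv (p q r w z : ℝ) (s : ℝ) :
    HasDerivAt (fun u : ℝ => p + q*u + r*u^2 + w*u^3 + z*u^4)
      (q + 2*r*s + 3*w*s^2 + 4*z*s^3) s := by
  have H := ((((hasDerivAt_const s p).add ((hasDerivAt_id s).const_mul q)).add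
      ((hasDerivAt_pow 2 s).const_mul r)).add
      ((hasDerivAt_pow 3 s).const_mul w)).add ((hasDerivAt_pow 4 s).const_mul z)
  refine H.congr_deriv ?_
  push_cast
  ring


set_option maxHeartbeats 1000000 in
/-- Upper second-order bound for a convex quartic polynomial `f` with positive definite
leading form `f₄`: for all `x, y` and `τ > 0`,
`f(y) − f(x) − ⟨∇f(x),y−x⟩ − (1/2)∇²f(x)[y−x]² ≤ (1/(6τ))∇²f(x)[y−x]² + (1+2τ)‖y−x‖_f⁴`. -/
theorem quartic_upper_approx {n : ℕ}
    (f : EuclideanSpace ℝ (Fin n) → ℝ)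
    (f4 : MultilinearMap ℝ (fun _ : Fin 4 => EuclideanSpace ℝ (Fin n)) ℝ)
    (hsymm : ∀ (v : Fin 4 → EuclideanSpace ℝ (Fin n)) (σ : Equiv.Perm (Fin 4)),
      f4 (v ∘ σ) = f4 v)
    (hf : ContDiff ℝ 4 f)
    (hconv : ConvexOn ℝ Set.univ f)
    (hD4 : ∀ (x : EuclideanSpace ℝ (Fin n)) (v : Fin 4 → EuclideanSpace ℝ (Fin n)),
      iteratedFDeriv ℝ 4 f x v = 24 * f4 v)
    (hpd : ∀ u : EuclideanSpace ℝ (Fin n), u ≠ 0 → 0 < f4 ![u, u, u, u])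
    (x y : EuclideanSpace ℝ (Fin n)) (τ : ℝ) (hτ : 0 < τ) :
    f y - f x - fderiv ℝ f x (y - x)
        - (1 / 2) * iteratedFDeriv ℝ 2 f x ![y - x, y - x]
      ≤ (1 / (6 * τ)) * iteratedFDeriv ℝ 2 f x ![y - x, y - x]
        + (1 + 2 * τ) * f4 ![y - x, y - x, y - x, y - x] := by
  rcases eq_or_ne y x with rfl | hne
  · have e2 : (iteratedFDeriv ℝ 2 f y) ![(0 : EuclideanSpace ℝ (Fin n)), 0] = 0 :=
      (iteratedFDeriv ℝ 2 f y).map_coord_zero 0 (by simp)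
    have e4 : f4 ![(0 : EuclideanSpace ℝ (Fin n)), 0, 0, 0] = 0 :=
      f4.map_coord_zero 0 (by simp)
    simp [e2, e4]
  set h := y - x with hh
  have hh0 : h ≠ 0 := sub_ne_zero.mpr hne
  set G : ℕ → ℝ → ℝ :=
    fun k t => iteratedFDeriv ℝ k f (x + t • h) (fun _ : Fin k => h) with hGdef
  have hder : ∀ k, k < 4 → ∀ t, HasDerivAt (G k) (G (k+1) t) t :=
    fun k hk t => aux_line f hf k hk x h t
  set a := f4 (fun _ : Fin 4 => h) with hadef
  set b := G 3 0 with hbdef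
  set c := G 2 0 with hcdef
  set c1 := G 1 0 with hc1def
  have hG4 : ∀ t, G 4 t = 24 * a := fun t => hD4 _ _
  -- a > 0
  have hvec4 : (fun _ : Fin 4 => h) = ![h, h, h, h] := by funext i; fin_cases i <;> rfl
  have ha_pos : 0 < a := by rw [hadef, hvec4]; exact hpd h hh0
  -- G 3
  have h3eq : ∀ t, G 3 t = b + 24 * a * t := by
    intro t
    have H : ∀ s, HasDerivAt (fun u => G 3 u - (b + 24*a*u + 0*u^2 + 0*u^3 + 0*u^4)) 0 s := by
      intro s
      have hp := quarticHasDeriv b (24*a) 0 0 0 s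
      have h2 := (hder 3 (by norm_num) s).sub hp
      refine h2.congr_deriv ?_
      rw [hG4 s]; ring
    have := const_of_hasDerivAt_zero H t
    norm_num at this
    linarith
  -- G 2
  have h2eq : ∀ t, G 2 t = c + b*t + 12*a*t^2 := by
    intro t
    have H : ∀ s, HasDerivAt (fun u => G 2 u - (c + b*u + (12*a)*u^2 + 0*u^3 + 0*u^4)) 0 s := by
      intro s
      have hp := quarticHasDeriv c b (12*a) 0 0 s
      have h2 := (hder 2 (by norm_num) s).sub hp
      refine h2.congr_deriv ?_
      rw [h3eq s]; ring
    have := const_of_hasDerivAt_zero H t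
    norm_num at this
    linarith
  -- G 1
  have h1eq : ∀ t, G 1 t = c1 + c*t + (b/2)*t^2 + (4*a)*t^3 := by
    intro t
    have H : ∀ s, HasDerivAt (fun u => G 1 u - (c1 + c*u + (b/2)*u^2 + (4*a)*u^3 + 0*u^4)) 0 s := by
      intro s
      have hp := quarticHasDeriv c1 c (b/2) (4*a) 0 s
      have h2 := (hder 1 (by norm_num) s).sub hp
      refine h2.congr_deriv ?_
      rw [h2eq s]; ring
    have := const_of_hasDerivAt_zero H t
    norm_num at this
    linarith
  -- G 0
  have h0eq : ∀ t, G 0 t = f x + c1*t + (c/2)*t^2 + (b/6)*t^3 + a*t^4 := by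
    intro t
    have H : ∀ s, HasDerivAt (fun u => G 0 u - (f x + c1*u + (c/2)*u^2 + (b/6)*u^3 + a*u^4)) 0 s := by
      intro s
      have hp := quarticHasDeriv (f x) c1 (c/2) (b/6) a s
      have h2 := (hder 0 (by norm_num) s).sub hp
      refine h2.congr_deriv ?_
      rw [h1eq s]; ring
    have := const_of_hasDerivAt_zero H t
    have hG00 : G 0 0 = f x := by simp [hGdef]
    rw [hG00] at this
    norm_num at this
    linarith
  have g0eq : ∀ t : ℝ, f (x + t • h) = f x + c1*t + (c/2)*t^2 + (b/6)*t^3 + a*t^4 := by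
    intro t
    have := h0eq t
    simpa [hGdef] using this
  -- convexity : midpoint inequality
  have hmid : ∀ t s : ℝ, f (x + t • h) ≤ (f (x + (t+s) • h) + f (x + (t-s) • h)) / 2 := by
    intro t s
    have hcv := hconv.2 (Set.mem_univ (x + (t+s) • h)) (Set.mem_univ (x + (t-s) • h))
      (by norm_num : (0:ℝ) ≤ 1/2) (by norm_num : (0:ℝ) ≤ 1/2) (by norm_num)
    have heq : (1/2 : ℝ) • (x + (t+s) • h) + (1/2 : ℝ) • (x + (t-s) • h) = x + t • h := by
      module
    rw [heq] at hcv
    simp only [smul_eq_mul] at hcv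
    linarith
  -- second derivative nonneg everywhere
  have hQ : ∀ t : ℝ, 0 ≤ 12*a*t^2 + b*t + c := by
    intro t
    by_contra hneg
    push_neg at hneg
    set Q := 12*a*t^2 + b*t + c with hQdef
    set s := Real.sqrt (-Q/(8*a)) with hsdef
    have hs2 : s^2 = -Q/(8*a) := Real.sq_sqrt (div_nonneg (by linarith) (by linarith))
    have key := hmid t s
    rw [g0eq, g0eq, g0eq] at key
    have hQs : 0 ≤ Q*s^2/2 + a*s^4 := by nlinarith [key]
    have hs4 : s^4 = Q^2/(64*a^2) := by
      rw [show s^4 = (s^2)^2 by ring, hs2, div_pow, neg_sq, show (8*a)^2 = 64*a^2 by ring]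
    have e : Q * (-Q/(8*a)) / 2 + a * (Q^2/(64*a^2)) = -3*Q^2/(64*a) := by
      field_simp
      ring
    rw [hs2, hs4, e] at hQs
    have h64 : (0:ℝ) < 64*a := by linarith
    rw [le_div_iff₀ h64] at hQs
    nlinarith [hQs, mul_pos_of_neg_of_neg hneg hneg]
  -- discriminant
  have hdisc : discrim (12*a) b c ≤ 0 := discrim_le_zero (fun u => by
    have := hQ u; nlinarith [this])
  rw [discrim] at hdisc
  have hc0 : 0 ≤ c := by have := hQ 0; linarith [this]
  -- rewrite goal
  have hvec2 : (![h, h] : Fin 2 → EuclideanSpace ℝ (Fin n)) = fun _ : Fin 2 => h := by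
    funext i; fin_cases i <;> rfl
  have hc2 : iteratedFDeriv ℝ 2 f x ![h, h] = c := by
    rw [hcdef, hGdef]; simp [hvec2]
  have hc1' : fderiv ℝ f x h = c1 := by
    rw [hc1def, hGdef]; simp [iteratedFDeriv_one_apply]
  have ha' : f4 ![h, h, h, h] = a := by rw [hadef, hvec4]
  have hfy : f y = f x + c1 + c/2 + b/6 + a := by
    have : x + (1:ℝ) • h = y := by rw [hh]; simp
    rw [← this, g0eq]; ring
  rw [hc2, hc1', ha', hfy]
  -- final arithmetic
  have hd2 : b^2*τ^2 ≤ 48*a*c*τ^2 := by nlinarith [hdisc, sq_nonneg τ]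
  have hX : (0:ℝ) ≤ c + 12*τ^2*a := by positivity
  have key : b*τ ≤ c + 12*τ^2*a := by
    nlinarith [hd2, sq_nonneg (c - 12*τ^2*a), hX]
  have h6τ : (0:ℝ) < 6*τ := by linarith
  have hre : (1/(6*τ))*c + (1+2*τ)*a - (c1 + c/2 + b/6 + a + f x - f x - c1 - (1/2)*c)
      = (c + 12*τ^2*a - b*τ)/(6*τ) := by
    field_simp
    ring
  linarith [div_nonneg (by linarith : (0:ℝ) ≤ c + 12*τ^2*a - b*τ) h6τ.le, hre]
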